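/- If ψ : ℝ → ℝ is a positive solution on an interval of the ODE -λ·ψ·ψ'' + (λ-1)·(ψ')² - λ²·ψ² + 2(λ-1)·P = 0 (with λ > 1 and P constant), then the quantity (2P + (ψ')² + λ²ψ²)·ψ^(2/λ - 2) is constant on that interval. -/

import Mathlib

open Real

/-- If ψ is a positive solution of `-λψψ'' + (λ-1)(ψ')² - λ²ψ² + 2(λ-1)P = 0` on an
open interval (with λ > 1), then the Bernoulli quantity
`(2P + (ψ')² + λ²ψ²) ψ^(2/λ-2)` has zero derivative on that interval. -/
theorem stmt_1 (lam P : ℝ) (hlam : 1 < lam) (a b : ℝ)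
    (ψ ψ' ψ'' : ℝ → ℝ)
    (hψ : ∀ θ ∈ Set.Ioo a b, HasDerivAt ψ (ψ' θ) θ)
    (hψ' : ∀ θ ∈ Set.Ioo a b, HasDerivAt ψ' (ψ'' θ) θ)
    (hpos : ∀ θ ∈ Set.Ioo a b, 0 < ψ θ)
    (hODE : ∀ θ ∈ Set.Ioo a b,
      -lam * ψ θ * ψ'' θ + (lam - 1) * (ψ' θ) ^ 2 - lam ^ 2 * (ψ θ) ^ 2
        + 2 * (lam - 1) * P = 0) :
    ∀ θ ∈ Set.Ioo a b,
      deriv (fun t => (2 * P + (ψ' t) ^ 2 + lam ^ 2 * (ψ t) ^ 2)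
        * ψ t ^ (2 / lam - 2)) θ = 0 := by
  intro θ hθ
  have hp := hpos θ hθ
  have hpn : ψ θ ≠ 0 := ne_of_gt hp
  have hlam0 : lam ≠ 0 := by linarith
  set c : ℝ := 2 / lam - 2 with hc
  have h1 : HasDerivAt (fun t => 2 * P + (ψ' t) ^ 2 + lam ^ 2 * (ψ t) ^ 2)
      (2 * ψ' θ * ψ'' θ + lam ^ 2 * (2 * ψ θ * ψ' θ)) θ := by
    have := ((hψ' θ hθ).fun_pow 2).const_add (2 * P)
    have h2 := ((hψ θ hθ).fun_pow 2).const_mul (lam ^ 2)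
    refine (this.fun_add h2).congr_deriv ?_
    ring
  have h2 : HasDerivAt (fun t => ψ t ^ c)
      (c * ψ θ ^ (c - 1) * ψ' θ) θ := by
    have := (hψ θ hθ).rpow_const (p := c) (Or.inl hpn)
    convert this using 1
    ring
  have hmul : HasDerivAt (fun t => (2 * P + ψ' t ^ 2 + lam ^ 2 * ψ t ^ 2) * ψ t ^ c) _ θ := h1.mul h2
  rw [hmul.deriv]
  have hrw : ψ θ ^ c = ψ θ ^ (c - 1) * ψ θ := by
    rw [← Real.rpow_add_one hpn (c - 1)]
    ring_nf
  rw [hrw]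
  have hode := hODE θ hθ
  have key : (2 * ψ' θ * ψ'' θ + lam ^ 2 * (2 * ψ θ * ψ' θ)) * ψ θ
      + (2 * P + (ψ' θ) ^ 2 + lam ^ 2 * (ψ θ) ^ 2) * (c * ψ' θ) = 0 := by
    rw [hc]
    field_simp
    linear_combination (-2 * ψ' θ) * hode
  calc (2 * ψ' θ * ψ'' θ + lam ^ 2 * (2 * ψ θ * ψ' θ)) * (ψ θ ^ (c - 1) * ψ θ)
        + (2 * P + (ψ' θ) ^ 2 + lam ^ 2 * (ψ θ) ^ 2) * (c * ψ θ ^ (c - 1) * ψ' θ)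
      = ψ θ ^ (c - 1) * ((2 * ψ' θ * ψ'' θ + lam ^ 2 * (2 * ψ θ * ψ' θ)) * ψ θ
        + (2 * P + (ψ' θ) ^ 2 + lam ^ 2 * (ψ θ) ^ 2) * (c * ψ' θ)) := by ring
    _ = 0 := by rw [key]; ring
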